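/- arXiv:1802.04197 — 3 statements merged into one kernel-verified Lean document; each statement's English description precedes it below -/
import Mathlib

section
/- Let $1 < p < 2$. There exists a constant $C_p > 0$ depending only on $p$ such that for all vectors $a, b \in \mathbb{R}$ and all $\epsilon > 0$, $|a-b|^2 (\epsilon + |a|^2 + |b|^2)^{(p-2)/2} \le C_p \big( (\epsilon + |a|^2)^{(p-2)/2} a - (\epsilon + |b|^2)^{(p-2)/2} b \big)(a - b)$. -/
open Real

private lemma phi_deriv (p ε : ℝ) (hε : 0 < ε) (x : ℝ) :
    HasDerivAt (fun x : ℝ => (ε + x ^ 2) ^ ((p - 2) / 2) * x)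
      (((p - 2) / 2 * (ε + x ^ 2) ^ ((p - 2) / 2 - 1) * (2 * x)) * x
        + (ε + x ^ 2) ^ ((p - 2) / 2) * 1) x := by
  have h1 : HasDerivAt (fun x : ℝ => ε + x ^ 2) (2 * x) x := by
    simpa using (hasDerivAt_pow 2 x).const_add ε
  have hne : ε + x ^ 2 ≠ 0 := by positivity
  have h2 := h1.rpow_const (p := (p - 2) / 2) (Or.inl hne)
  have h3 := h2.mul (hasDerivAt_id x)
  simp only [Pi.mul_def, id] at h3
  exact h3.congr_deriv (by ring)

private lemma key (p : ℝ) (hp1 : 1 < p) (hp2 : p < 2) (ε : ℝ) (hε : 0 < ε)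
    (a b : ℝ) (hab : b < a) :
    (p - 1) * ((ε + a ^ 2 + b ^ 2) ^ ((p - 2) / 2) * (a - b)) ≤
      (ε + a ^ 2) ^ ((p - 2) / 2) * a - (ε + b ^ 2) ^ ((p - 2) / 2) * b := by
  set q := (p - 2) / 2 with hq
  obtain ⟨c, hc, hceq⟩ := exists_hasDerivAt_eq_slope
    (fun x : ℝ => (ε + x ^ 2) ^ q * x)
    (fun x => ((p - 2) / 2 * (ε + x ^ 2) ^ ((p - 2) / 2 - 1) * (2 * x)) * x
        + (ε + x ^ 2) ^ ((p - 2) / 2) * 1)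
    hab (fun x _ => (phi_deriv p ε hε x).continuousAt.continuousWithinAt)
    (fun x _ => phi_deriv p ε hε x)
  have hc2 : c ^ 2 ≤ a ^ 2 + b ^ 2 := by
    nlinarith [mul_pos (sub_pos.2 hc.2) (sub_pos.2 hc.1), sq_nonneg (a + b - c)]
  have ht : (0:ℝ) < ε + c ^ 2 := by positivity
  -- lower bound on the derivative at c
  have hpow : (ε + c ^ 2) ^ q = (ε + c ^ 2) ^ (q - 1) * (ε + c ^ 2) := by
    rw [← Real.rpow_add_one ht.ne']; ring_nf
  have htq1 : (0:ℝ) < (ε + c ^ 2) ^ (q - 1) := Real.rpow_pos_of_pos ht _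
  have hDval : ((p - 2) / 2 * (ε + c ^ 2) ^ ((p - 2) / 2 - 1) * (2 * c)) * c
        + (ε + c ^ 2) ^ ((p - 2) / 2) * 1
      = (ε + c ^ 2) ^ (q - 1) * (ε + (p - 1) * c ^ 2) := by
    rw [← hq, hpow]; ring
  have hD_ge : (p - 1) * (ε + a ^ 2 + b ^ 2) ^ q ≤
      ((p - 2) / 2 * (ε + c ^ 2) ^ ((p - 2) / 2 - 1) * (2 * c)) * c
        + (ε + c ^ 2) ^ ((p - 2) / 2) * 1 := by
    rw [hDval]
    have h1 : (p - 1) * (ε + c ^ 2) ≤ ε + (p - 1) * c ^ 2 := by nlinarith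
    have h2 : (p - 1) * (ε + c ^ 2) ^ q ≤ (ε + c ^ 2) ^ (q - 1) * (ε + (p - 1) * c ^ 2) := by
      calc (p - 1) * (ε + c ^ 2) ^ q = (ε + c ^ 2) ^ (q - 1) * ((p - 1) * (ε + c ^ 2)) := by
            rw [hpow]; ring
        _ ≤ _ := by exact mul_le_mul_of_nonneg_left h1 htq1.le
    refine le_trans ?_ h2
    have h3 : (ε + a ^ 2 + b ^ 2) ^ q ≤ (ε + c ^ 2) ^ q :=
      Real.rpow_le_rpow_of_nonpos ht (by linarith) (by rw [hq]; linarith)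
    exact mul_le_mul_of_nonneg_left h3 (by linarith)
  have hab' : (0:ℝ) < a - b := sub_pos.2 hab
  rw [eq_div_iff hab'.ne'] at hceq
  have := mul_le_mul_of_nonneg_right hD_ge hab'.le
  rw [hceq] at this
  linarith [this]

/-- Monotonicity inequality for the regularized singular p-Laplacian nonlinearity,
    scalar case, 1 < p < 2. -/
theorem stmt_0 (p : ℝ) (hp1 : 1 < p) (hp2 : p < 2) :
    ∃ C : ℝ, 0 < C ∧ ∀ a b ε : ℝ, 0 < ε →
      |a - b| ^ 2 * (ε + |a| ^ 2 + |b| ^ 2) ^ ((p - 2) / 2) ≤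
        C * (((ε + |a| ^ 2) ^ ((p - 2) / 2) * a - (ε + |b| ^ 2) ^ ((p - 2) / 2) * b) * (a - b)) := by
  have hp1' : (0:ℝ) < p - 1 := by linarith
  refine ⟨1 / (p - 1), by positivity, fun a b ε hε => ?_⟩
  rw [sq_abs, sq_abs, sq_abs]
  have main : ∀ x y : ℝ, y < x →
      (x - y) ^ 2 * (ε + x ^ 2 + y ^ 2) ^ ((p - 2) / 2) ≤
        1 / (p - 1) * (((ε + x ^ 2) ^ ((p - 2) / 2) * x - (ε + y ^ 2) ^ ((p - 2) / 2) * y) * (x - y)) := by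
    intro x y hxy
    have h := key p hp1 hp2 ε hε x y hxy
    have h2 := mul_le_mul_of_nonneg_right h (sub_pos.2 hxy).le
    rw [div_mul_eq_mul_div, le_div_iff₀ hp1', one_mul]
    calc ((x - y) ^ 2 * (ε + x ^ 2 + y ^ 2) ^ ((p - 2) / 2)) * (p - 1)
        = ((p - 1) * ((ε + x ^ 2 + y ^ 2) ^ ((p - 2) / 2) * (x - y))) * (x - y) := by ring
      _ ≤ _ := h2
  rcases lt_trichotomy b a with h | h | h
  · exact main a b h
  · simp [h]
  · have := main b a h
    calc (a - b) ^ 2 * (ε + a ^ 2 + b ^ 2) ^ ((p - 2) / 2)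
        = (b - a) ^ 2 * (ε + b ^ 2 + a ^ 2) ^ ((p - 2) / 2) := by ring_nf
      _ ≤ 1 / (p - 1) * (((ε + b ^ 2) ^ ((p - 2) / 2) * b - (ε + a ^ 2) ^ ((p - 2) / 2) * a) * (b - a)) := this
      _ = _ := by ring
end

section
/- Let $B_R \subset \mathbb{R}^2$ be a ball of radius $R$ centered at a point $a$, and let $v \in C^1(\overline{B_R})$. Suppose $v$ is monotone in the sense of Lebesgue, i.e., for every closed ball $\overline{B_t}(a) \subset B_R$ the maximum and minimum of $v$ over $\overline{B_t}$ are attained on $\partial B_t$. Then for every $0 < r < R$, $(\operatorname{osc}_{B_r} v)^2 \log(R/r) \le \pi \int_{B_R \setminus B_r} |\nabla v(x)|^2 \, dx$. -/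
open Real MeasureTheory Metric intervalIntegral

noncomputable def pvec (x y : ℝ) : EuclideanSpace ℝ (Fin 2) :=
  x • EuclideanSpace.single 0 1 + y • EuclideanSpace.single 1 1

lemma pvec_apply0 (x y : ℝ) : pvec x y 0 = x := by
  simp [pvec, EuclideanSpace.single_apply]

lemma pvec_apply1 (x y : ℝ) : pvec x y 1 = y := by
  simp [pvec, EuclideanSpace.single_apply]

lemma pvec_norm (x y : ℝ) : ‖pvec x y‖ = Real.sqrt (x^2 + y^2) := by
  rw [EuclideanSpace.norm_eq]
  congr 1
  rw [Fin.sum_univ_two, pvec_apply0, pvec_apply1]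
  simp [sq_abs, sq]

lemma pvec_contDiff : ContDiff ℝ 1 (fun θ : ℝ => pvec (Real.cos θ) (Real.sin θ)) := by
  unfold pvec
  exact (Real.contDiff_cos.smul contDiff_const).add (Real.contDiff_sin.smul contDiff_const)

lemma pvec_hasDerivAt (θ : ℝ) :
    HasDerivAt (fun θ : ℝ => pvec (Real.cos θ) (Real.sin θ))
      (pvec (-Real.sin θ) (Real.cos θ)) θ := by
  unfold pvec
  exact ((Real.hasDerivAt_cos θ).smul_const _).add ((Real.hasDerivAt_sin θ).smul_const _)

noncomputable def curve (a : EuclideanSpace ℝ (Fin 2)) (t θ : ℝ) : EuclideanSpace ℝ (Fin 2) :=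
  a + t • pvec (Real.cos θ) (Real.sin θ)

lemma curve_dist (a : EuclideanSpace ℝ (Fin 2)) (t θ : ℝ) (ht : 0 ≤ t) :
    dist (curve a t θ) a = t := by
  rw [dist_eq_norm, curve, add_sub_cancel_left, norm_smul, pvec_norm]
  rw [Real.cos_sq_add_sin_sq]
  simp [abs_of_nonneg ht]

lemma curve_surj (a : EuclideanSpace ℝ (Fin 2)) (t : ℝ) (ht : 0 < t)
    (x : EuclideanSpace ℝ (Fin 2)) (hx : x ∈ sphere a t) :
    ∃ θ ∈ Set.Ioc (-π) π, curve a t θ = x := by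
  set z : ℂ := ⟨(x - a) 0, (x - a) 1⟩ with hz
  have habs : ‖z‖ = t := by
    have : ‖x - a‖ = t := by
      rw [← dist_eq_norm]
      exact hx
    rw [← this, Complex.norm_def, Complex.normSq_mk, EuclideanSpace.norm_eq,
      Fin.sum_univ_two]
    simp [sq_abs, sq]
  have hz0 : z ≠ 0 := by
    intro h
    rw [h, norm_zero] at habs
    exact ht.ne habs
  refine ⟨Complex.arg z, Complex.arg_mem_Ioc z, ?_⟩
  have hc : Real.cos (Complex.arg z) = (x - a) 0 / t := by
    rw [← habs, Complex.cos_arg hz0]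
  have hs : Real.sin (Complex.arg z) = (x - a) 1 / t := by
    rw [← habs, Complex.sin_arg]
  have heta : ∀ w : EuclideanSpace ℝ (Fin 2), pvec (w 0) (w 1) = w := by
    intro w
    ext i
    fin_cases i
    · simpa using pvec_apply0 (w 0) (w 1)
    · simpa using pvec_apply1 (w 0) (w 1)
  have hsmul : t • pvec (Real.cos (Complex.arg z)) (Real.sin (Complex.arg z))
      = pvec ((x - a) 0) ((x - a) 1) := by
    rw [hc, hs]
    unfold pvec
    rw [smul_add, smul_smul, smul_smul]
    field_simp
  rw [curve, hsmul, heta]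
  abel

noncomputable def chi : EuclideanSpace ℝ (Fin 2) ≃ᵐ ℝ × ℝ :=
  (MeasurableEquiv.toLp 2 (Fin 2 → ℝ)).symm.trans MeasurableEquiv.finTwoArrow

lemma chi_mp : MeasurePreserving chi volume volume := by
  have h := (MeasureTheory.volume_preserving_finTwoArrow ℝ).comp
    (EuclideanSpace.volume_preserving_symm_measurableEquiv_toLp (Fin 2))
  exact h

noncomputable def Phi (a : EuclideanSpace ℝ (Fin 2)) : ℝ × ℝ → EuclideanSpace ℝ (Fin 2) :=
  fun p => a + chi.symm p

lemma chi_symm_eq (p : ℝ × ℝ) : chi.symm p = pvec p.1 p.2 := by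
  have : chi (pvec p.1 p.2) = p := by
    have h0 : chi (pvec p.1 p.2) = (pvec p.1 p.2 0, pvec p.1 p.2 1) := rfl
    rw [h0, pvec_apply0, pvec_apply1]
  apply chi.injective
  rw [MeasurableEquiv.apply_symm_apply, this]
lemma Phi_polar (a : EuclideanSpace ℝ (Fin 2)) (t θ : ℝ) :
    Phi a (polarCoord.symm (t, θ)) = curve a t θ := by
  rw [Phi, polarCoord_symm_apply, chi_symm_eq, curve]
  congr 1
  unfold pvec
  rw [smul_add, smul_smul, smul_smul]

lemma Phi_mp (a : EuclideanSpace ℝ (Fin 2)) : MeasurePreserving (Phi a) volume volume :=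
  (measurePreserving_add_left volume a).comp chi_mp.symm

lemma Phi_emb (a : EuclideanSpace ℝ (Fin 2)) : MeasurableEmbedding (Phi a) :=
  (MeasurableEquiv.addLeft a).measurableEmbedding.comp chi.symm.measurableEmbedding

lemma quad_trick (I J : ℝ) (hI : 0 ≤ I) (hJ : 0 ≤ J)
    (h : ∀ l : ℝ, 0 < l → J ≤ l/2 * I + π/l) : J^2 ≤ 2*π*I := by
  rcases eq_or_lt_of_le hI with hI0 | hIpos
  · have hJ0 : J ≤ 0 := by
      by_contra hJpos
      push_neg at hJpos
      have hl : 0 < 2*π/J := by positivity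
      have := h _ hl
      rw [← hI0] at this
      have : J ≤ J/2 := by
        have : π / (2*π/J) = J/2 := by
          field_simp
        linarith [this ▸ (by linarith : J ≤ 0 + π/(2*π/J))]
      linarith
    have : J = 0 := le_antisymm hJ0 hJ
    rw [this]
    have h0 : (0:ℝ)^2 = 0 := by norm_num
    rw [h0]
    positivity
  · set l := Real.sqrt (2*π/I) with hl
    have hlpos : 0 < l := Real.sqrt_pos.2 (by positivity)
    have hlsq : l^2 = 2*π/I := Real.sq_sqrt (by positivity)
    have hJle := h l hlpos
    have h2 : l^2 * I = 2*π := by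
      rw [hlsq]
      field_simp
    have hpil : π / l = l * I / 2 := by
      rw [eq_div_iff (two_ne_zero), div_mul_eq_mul_div, div_eq_iff hlpos.ne']
      nlinarith [h2]
    rw [hpil] at hJle
    have : J ≤ l * I := by linarith
    have : J^2 ≤ (l*I)^2 := by nlinarith
    calc J^2 ≤ (l*I)^2 := this
      _ = l^2 * I * I := by ring
      _ = 2*π*I := by rw [hlsq]; field_simp

lemma two_arc (g gd : ℝ → ℝ) (hg : ∀ θ, HasDerivAt g (gd θ) θ)
    (hper : Function.Periodic g (2*π)) (hgdper : Function.Periodic gd (2*π))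
    (hcont : Continuous gd) (θ₁ θ₂ : ℝ) (h21 : θ₂ ≤ θ₁) (h12 : θ₁ ≤ θ₂ + 2*π) :
    2*(g θ₁ - g θ₂) ≤ ∫ θ in (-π)..π, |gd θ| := by
  have hInt : ∀ u w : ℝ, IntervalIntegrable gd volume u w :=
    fun u w => hcont.intervalIntegrable u w
  have hIntAbs : ∀ u w : ℝ, IntervalIntegrable (fun θ => |gd θ|) volume u w :=
    fun u w => hcont.abs.intervalIntegrable u w
  have ftc : ∀ u w : ℝ, g w - g u = ∫ θ in u..w, gd θ := fun u w =>
    (integral_eq_sub_of_hasDerivAt (fun x _ => hg x) (hInt u w)).symm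
  have e1 : g θ₁ - g θ₂ ≤ ∫ θ in θ₂..θ₁, |gd θ| := by
    rw [ftc θ₂ θ₁]
    exact le_trans (le_abs_self _) (abs_integral_le_integral_abs h21)
  have e2 : g θ₁ - g θ₂ ≤ ∫ θ in θ₁..(θ₂+2*π), |gd θ| := by
    have h' : g θ₁ - g θ₂ = -(g (θ₂+2*π) - g θ₁) := by rw [hper θ₂]; ring
    rw [h', ftc θ₁ (θ₂+2*π)]
    exact le_trans (neg_le_abs _) (abs_integral_le_integral_abs h12)
  have hadd : (∫ θ in θ₂..θ₁, |gd θ|) + ∫ θ in θ₁..(θ₂+2*π), |gd θ|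
      = ∫ θ in θ₂..(θ₂+2*π), |gd θ| :=
    integral_add_adjacent_intervals (hIntAbs _ _) (hIntAbs _ _)
  have hperabs : Function.Periodic (fun θ => |gd θ|) (2*π) := fun θ => by
    simp [hgdper θ]
  have hshift : (∫ θ in θ₂..(θ₂+2*π), |gd θ|) = ∫ θ in (-π)..π, |gd θ| := by
    have := hperabs.intervalIntegral_add_eq θ₂ (-π)
    rw [this, show (-π)+2*π = π by ring]
  linarith

lemma interval_cs (f : ℝ → ℝ) (hc : Continuous f) :
    (∫ θ in (-π)..π, |f θ|)^2 ≤ 2*π*∫ θ in (-π)..π, (f θ)^2 := by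
  have hpi : (-π : ℝ) ≤ π := by linarith [Real.pi_pos]
  have hIf : IntervalIntegrable (fun θ => |f θ|) volume (-π) π :=
    hc.abs.intervalIntegrable _ _
  have hIsq : IntervalIntegrable (fun θ => (f θ)^2) volume (-π) π :=
    (hc.pow 2).intervalIntegrable _ _
  apply quad_trick
  · exact integral_nonneg hpi (fun θ _ => sq_nonneg _)
  · exact integral_nonneg hpi (fun θ _ => abs_nonneg _)
  · intro l hl
    have hpt : ∀ θ, |f θ| ≤ l/2 * (f θ)^2 + 1/(2*l) := by
      intro θ
      have hnum : 0 ≤ l^2*(f θ)^2 + 1 - 2*l*|f θ| := by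
        nlinarith [sq_nonneg (l*|f θ| - 1), sq_abs (f θ)]
      have heq : l/2*(f θ)^2 + 1/(2*l) - |f θ| = (l^2*(f θ)^2 + 1 - 2*l*|f θ|)/(2*l) := by
        field_simp
      have : 0 ≤ l/2*(f θ)^2 + 1/(2*l) - |f θ| := by
        rw [heq]
        positivity
      linarith
    have hmono : (∫ θ in (-π)..π, |f θ|)
        ≤ ∫ θ in (-π)..π, (l/2 * (f θ)^2 + 1/(2*l)) := by
      apply integral_mono_on hpi hIf
      · exact ((hIsq.const_mul _).add intervalIntegrable_const)
      · exact fun θ _ => hpt θ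
    have hsplit : (∫ θ in (-π)..π, (l/2 * (f θ)^2 + 1/(2*l)))
        = l/2 * (∫ θ in (-π)..π, (f θ)^2) + π/l := by
      rw [integral_add (hIsq.const_mul _) intervalIntegrable_const,
        intervalIntegral.integral_const_mul, intervalIntegral.integral_const]
      have : (π - -π) • (1/(2*l)) = π/l := by
        rw [smul_eq_mul]
        field_simp
        ring
      rw [this]
    linarith [hmono, hsplit ▸ hmono]

lemma key_circle (a : EuclideanSpace ℝ (Fin 2)) (R : ℝ)
    (v : EuclideanSpace ℝ (Fin 2) → ℝ) (hv : ContDiffOn ℝ 1 v (closedBall a R))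
    (t : ℝ) (ht0 : 0 < t) (htR : t < R) :
    (sSup (v '' sphere a t) - sInf (v '' sphere a t))^2
      ≤ (π/2) * t^2 * ∫ θ in (-π)..π, ‖fderiv ℝ v (curve a t θ)‖^2 := by
  have hpi := Real.pi_pos
  have hmem : ∀ θ, curve a t θ ∈ ball a R := by
    intro θ
    rw [mem_ball, curve_dist a t θ ht0.le]
    exact htR
  have hfc : ContinuousOn (fderiv ℝ v) (ball a R) :=
    (hv.mono ball_subset_closedBall).continuousOn_fderiv_of_isOpen isOpen_ball le_rfl
  have hdiff : ∀ θ, DifferentiableAt ℝ v (curve a t θ) := by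
    intro θ
    have hnhds : closedBall a R ∈ nhds (curve a t θ) :=
      Filter.mem_of_superset (isOpen_ball.mem_nhds (hmem θ)) ball_subset_closedBall
    exact (hv.contDiffAt hnhds).differentiableAt one_ne_zero
  set gd : ℝ → ℝ := fun θ => (fderiv ℝ v (curve a t θ)) (t • pvec (-Real.sin θ) (Real.cos θ))
    with hgd_def
  set g : ℝ → ℝ := fun θ => v (curve a t θ) with hg_def
  have hcurve : ∀ θ, HasDerivAt (fun θ => curve a t θ) (t • pvec (-Real.sin θ) (Real.cos θ)) θ := by
    intro θ
    exact ((pvec_hasDerivAt θ).const_smul t).const_add a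
  have hg : ∀ θ, HasDerivAt g (gd θ) θ := by
    intro θ
    exact ((hdiff θ).hasFDerivAt.comp_hasDerivAt θ (hcurve θ))
  have hccurve : Continuous (fun θ => curve a t θ) :=
    continuous_const.add (pvec_contDiff.continuous.const_smul t)
  have hcont_gd : Continuous gd := by
    have h2 : Continuous fun θ => fderiv ℝ v (curve a t θ) :=
      hfc.comp_continuous hccurve hmem
    have h3 : Continuous fun θ : ℝ => t • pvec (-Real.sin θ) (Real.cos θ) := by
      unfold pvec
      fun_prop
    exact h2.clm_apply h3
  have hper_curve : ∀ θ, curve a t (θ + 2*π) = curve a t θ := by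
    intro θ
    unfold curve
    rw [Real.cos_add_two_pi, Real.sin_add_two_pi]
  have hper_g : Function.Periodic g (2*π) := fun θ => by
    simp only [hg_def, hper_curve θ]
  have hper_gd : Function.Periodic gd (2*π) := fun θ => by
    simp only [hgd_def, hper_curve θ, Real.cos_add_two_pi, Real.sin_add_two_pi]
  -- max and min on sphere
  have hsphne : (sphere a t).Nonempty := NormedSpace.sphere_nonempty.2 ht0.le
  have hvcont : ContinuousOn v (sphere a t) := by
    apply (hv.continuousOn).mono
    intro x hx
    rw [mem_closedBall, mem_sphere] at *
    rw [hx]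
    exact htR.le
  obtain ⟨x₁, hx₁mem, hx₁, hx₁ge⟩ := (isCompact_sphere a t).exists_sSup_image_eq_and_ge hsphne hvcont
  obtain ⟨x₂, hx₂mem, hx₂, hx₂le⟩ := (isCompact_sphere a t).exists_sInf_image_eq_and_le hsphne hvcont
  obtain ⟨φ₁, hφ₁, hcφ₁⟩ := curve_surj a t ht0 x₁ hx₁mem
  obtain ⟨φ₂, hφ₂, hcφ₂⟩ := curve_surj a t ht0 x₂ hx₂mem
  -- choose ordered representatives
  have key2 : 2*(sSup (v '' sphere a t) - sInf (v '' sphere a t)) ≤ ∫ θ in (-π)..π, |gd θ| := by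
    have hval : sSup (v '' sphere a t) - sInf (v '' sphere a t) = g φ₁ - g φ₂ := by
      rw [hx₁, hx₂, hg_def]
      simp [hcφ₁, hcφ₂]
    rw [hval]
    rcases le_or_gt φ₂ φ₁ with hle | hlt
    · exact two_arc g gd hg hper_g hper_gd hcont_gd φ₁ φ₂ hle
        (by obtain ⟨h1a, h1b⟩ := hφ₁; obtain ⟨h2a, h2b⟩ := hφ₂; linarith)
    · have hval2 : g φ₂ = g (φ₂ - 2*π) := by
        rw [← hper_g (φ₂ - 2*π)]
        ring_nf
      rw [show g φ₁ - g φ₂ = g φ₁ - g (φ₂ - 2*π) by rw [← hval2]]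
      exact two_arc g gd hg hper_g hper_gd hcont_gd φ₁ (φ₂ - 2*π)
        (by linarith [hφ₁.1, hφ₂.2]) (by linarith)
  -- Cauchy-Schwarz
  have hcs := interval_cs gd hcont_gd
  -- pointwise bound gd² ≤ t²‖fderiv‖²
  have hptbd : ∀ θ, (gd θ)^2 ≤ t^2 * ‖fderiv ℝ v (curve a t θ)‖^2 := by
    intro θ
    have h1 : |gd θ| ≤ ‖fderiv ℝ v (curve a t θ)‖ * (t * 1) := by
      have := (fderiv ℝ v (curve a t θ)).le_opNorm (t • pvec (-Real.sin θ) (Real.cos θ))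
      rw [norm_smul, pvec_norm] at this
      have hn : Real.sqrt ((-Real.sin θ)^2 + (Real.cos θ)^2) = 1 := by
        rw [neg_pow, show ((-1:ℝ))^2 = 1 by norm_num, one_mul, Real.sin_sq_add_cos_sq]
        exact Real.sqrt_one
      rw [hn, Real.norm_of_nonneg ht0.le] at this
      exact this
    rw [mul_one] at h1
    have h2 : (gd θ)^2 = |gd θ|^2 := (sq_abs _).symm
    rw [h2]
    nlinarith [abs_nonneg (gd θ), norm_nonneg (fderiv ℝ v (curve a t θ)), ht0]
  have hcont_f : Continuous fun θ => ‖fderiv ℝ v (curve a t θ)‖^2 := by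
    have h2 : Continuous fun θ => fderiv ℝ v (curve a t θ) :=
      hfc.comp_continuous hccurve hmem
    exact (h2.norm).pow 2
  have hintmono : (∫ θ in (-π)..π, (gd θ)^2)
      ≤ ∫ θ in (-π)..π, t^2 * ‖fderiv ℝ v (curve a t θ)‖^2 := by
    apply intervalIntegral.integral_mono_on (by linarith)
    · exact ((hcont_gd.pow 2).intervalIntegrable _ _)
    · exact ((continuous_const.mul hcont_f).intervalIntegrable _ _)
    · exact fun θ _ => hptbd θ
  rw [intervalIntegral.integral_const_mul] at hintmono
  set osc := sSup (v '' sphere a t) - sInf (v '' sphere a t) with hosc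
  have h4 : (2*osc)^2 ≤ (∫ θ in (-π)..π, |gd θ|)^2 := by
    have hJnn : 0 ≤ ∫ θ in (-π)..π, |gd θ| :=
      intervalIntegral.integral_nonneg (by linarith) (fun θ _ => abs_nonneg _)
    have hoscnn : 0 ≤ osc := by
      rw [hosc, hx₁, hx₂]
      linarith [hx₂le x₁ hx₁mem]
    exact pow_le_pow_left₀ (by linarith) key2 2
  have h5 : 2*π*(∫ θ in (-π)..π, (gd θ)^2)
      ≤ 2*π*(t^2 * ∫ θ in (-π)..π, ‖fderiv ℝ v (curve a t θ)‖^2) :=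
    mul_le_mul_of_nonneg_left hintmono (by positivity)
  have h6 := h4.trans (hcs.trans h5)
  set K := ∫ θ in (-π)..π, ‖fderiv ℝ v (curve a t θ)‖^2 with hK
  clear_value K osc
  nlinarith [h6]

/-- Lebesgue's oscillation lemma: for a C¹ monotone (in the sense of Lebesgue) function on a
    planar ball, (osc_{B_r} v)² log(R/r) ≤ π ∫_{B_R \ B_r} |∇v|². -/
theorem stmt_4 (a : EuclideanSpace ℝ (Fin 2)) (R : ℝ) (hR : 0 < R)
    (v : EuclideanSpace ℝ (Fin 2) → ℝ) (hv : ContDiffOn ℝ 1 v (closedBall a R))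
    (hmono : ∀ t : ℝ, 0 < t → closedBall a t ⊆ ball a R →
      sSup (v '' closedBall a t) = sSup (v '' sphere a t) ∧
      sInf (v '' closedBall a t) = sInf (v '' sphere a t))
    (r : ℝ) (hr0 : 0 < r) (hrR : r < R) :
    (sSup (v '' ball a r) - sInf (v '' ball a r)) ^ 2 * Real.log (R / r) ≤
      π * ∫ x in ball a R \ ball a r, ‖fderiv ℝ v x‖ ^ 2 := by
  have hpi := Real.pi_pos
  have hlog : 0 ≤ Real.log (R / r) :=
    Real.log_nonneg (by rw [le_div_iff₀ hr0]; linarith)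
  set osc := sSup (v '' ball a r) - sInf (v '' ball a r) with hosc_def
  -- basic boundedness facts
  have hKc : IsCompact (v '' closedBall a R) :=
    (isCompact_closedBall a R).image_of_continuousOn hv.continuousOn
  have hamem : a ∈ ball a r := mem_ball_self hr0
  have hosc_nn : 0 ≤ osc := by
    have hba : BddAbove (v '' ball a r) :=
      hKc.bddAbove.mono (Set.image_mono (ball_subset_closedBall.trans
        (closedBall_subset_closedBall hrR.le)))
    have hbb : BddBelow (v '' ball a r) :=
      hKc.bddBelow.mono (Set.image_mono (ball_subset_closedBall.trans
        (closedBall_subset_closedBall hrR.le)))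
    have h1 : sInf (v '' ball a r) ≤ v a := csInf_le hbb ⟨a, hamem, rfl⟩
    have h2 : v a ≤ sSup (v '' ball a r) := le_csSup hba ⟨a, hamem, rfl⟩
    simp only [hosc_def]
    linarith
  -- monotonicity: osc is dominated by the oscillation on each sphere
  have hoscle : ∀ t, t ∈ Set.Ioo r R →
      osc ≤ sSup (v '' sphere a t) - sInf (v '' sphere a t) := by
    intro t ht
    obtain ⟨hrt, htR⟩ := ht
    have ht0 : 0 < t := hr0.trans hrt
    obtain ⟨hsup, hinf⟩ := hmono t ht0 (closedBall_subset_ball htR)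
    have hsubset : ball a r ⊆ closedBall a t :=
      ball_subset_closedBall.trans (closedBall_subset_closedBall hrt.le)
    have hbA : BddAbove (v '' closedBall a t) :=
      hKc.bddAbove.mono (Set.image_mono (closedBall_subset_closedBall htR.le))
    have hbB : BddBelow (v '' closedBall a t) :=
      hKc.bddBelow.mono (Set.image_mono (closedBall_subset_closedBall htR.le))
    have hne : (v '' ball a r).Nonempty := ⟨v a, a, hamem, rfl⟩
    have h1 : sSup (v '' ball a r) ≤ sSup (v '' closedBall a t) :=
      csSup_le_csSup hbA hne (Set.image_mono hsubset)
    have h2 : sInf (v '' closedBall a t) ≤ sInf (v '' ball a r) :=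
      csInf_le_csInf hbB hne (Set.image_mono hsubset)
    simp only [hosc_def]
    rw [hsup] at h1
    rw [hinf] at h2
    linarith
  -- the per-circle estimate
  have hkey : ∀ t, t ∈ Set.Ioo r R →
      2 * osc^2 / π * t⁻¹ ≤ t * ∫ θ in (-π)..π, ‖fderiv ℝ v (curve a t θ)‖^2 := by
    intro t ht
    obtain ⟨hrt, htR⟩ := ht
    have ht0 : 0 < t := hr0.trans hrt
    have h1 := key_circle a R v hv t ht0 htR
    have h2 := hoscle t ⟨hrt, htR⟩
    have h3 : osc^2 ≤ (sSup (v '' sphere a t) - sInf (v '' sphere a t))^2 :=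
      pow_le_pow_left₀ hosc_nn h2 2
    have h4 : osc^2 ≤ (π/2) * t^2 * ∫ θ in (-π)..π, ‖fderiv ℝ v (curve a t θ)‖^2 :=
      h3.trans h1
    have e : 2*osc^2/π*t⁻¹ = (2*osc^2)/(π*t) := by field_simp
    rw [e, div_le_iff₀ (by positivity)]
    nlinarith [h4]
  -- the annulus and the energy integrand
  set AE : Set (EuclideanSpace ℝ (Fin 2)) := ball a R \ ball a r with hAE_def
  set GE : EuclideanSpace ℝ (Fin 2) → ENNReal :=
    fun x => ENNReal.ofReal (‖fderiv ℝ v x‖^2) with hGE_def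
  have hAEsub : AE ⊆ ball a R := Set.diff_subset
  have hmes : Measurable fun x : EuclideanSpace ℝ (Fin 2) => ‖fderiv ℝ v x‖^2 :=
    ((measurable_fderiv ℝ v).norm).pow_const 2
  have hint : IntegrableOn (fun x => ‖fderiv ℝ v x‖^2) AE volume := by
    have hud : UniqueDiffOn ℝ (closedBall a R) :=
      uniqueDiffOn_convex (convex_closedBall a R)
        (by rw [interior_closedBall a hR.ne']; exact ⟨a, mem_ball_self hR⟩)
    have hcfw : ContinuousOn (fderivWithin ℝ v (closedBall a R)) (closedBall a R) :=
      hv.continuousOn_fderivWithin hud le_rfl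
    obtain ⟨C, hC⟩ := (isCompact_closedBall a R).exists_bound_of_continuousOn hcfw
    refine Measure.integrableOn_of_bounded (M := C^2)
      ((measure_mono hAEsub).trans_lt measure_ball_lt_top).ne
      hmes.aestronglyMeasurable ?_
    apply (ae_restrict_iff' (measurableSet_ball.diff measurableSet_ball)).2
    apply Filter.Eventually.of_forall
    intro x hx
    ·
      have hxb : x ∈ ball a R := hAEsub hx
      have hfw : fderivWithin ℝ v (closedBall a R) x = fderiv ℝ v x :=
        fderivWithin_of_mem_nhds (Filter.mem_of_superset (isOpen_ball.mem_nhds hxb)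
          ball_subset_closedBall)
      have h1 : ‖fderiv ℝ v x‖ ≤ C := hfw ▸ hC x (ball_subset_closedBall hxb)
      have h2 : ‖fderiv ℝ v x‖^2 ≤ C^2 := pow_le_pow_left₀ (norm_nonneg _) h1 2
      calc ‖‖fderiv ℝ v x‖^2‖ = ‖fderiv ℝ v x‖^2 := by
            rw [Real.norm_eq_abs, abs_of_nonneg (by positivity)]
        _ ≤ C^2 := h2
  have hofReal : ENNReal.ofReal (∫ x in AE, ‖fderiv ℝ v x‖^2) = ∫⁻ x in AE, GE x :=
    ofReal_integral_eq_lintegral_ofReal hint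
      (Filter.Eventually.of_forall fun x => by positivity)
  -- polar change of variables
  set s : Set (ℝ × ℝ) := Set.Ioo r R ×ˢ Set.Ioo (-π) π with hs_def
  have hs_meas : MeasurableSet s := measurableSet_Ioo.prod measurableSet_Ioo
  have hs_target : s ⊆ polarCoord.target := by
    rw [polarCoord_target]
    exact Set.prod_mono (fun x hx => hr0.trans hx.1) subset_rfl
  set B : ℝ × ℝ → ℝ × ℝ →L[ℝ] ℝ × ℝ := fun p =>
    LinearMap.toContinuousLinearMap (Matrix.toLin (Module.Basis.finTwoProd ℝ) (Module.Basis.finTwoProd ℝ)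
      !![Real.cos p.2, -p.1 * Real.sin p.2; Real.sin p.2, p.1 * Real.cos p.2]) with hB_def
  have hB_det : ∀ p, (B p).det = p.1 := by
    intro p
    conv_rhs => rw [← one_mul p.1, ← Real.cos_sq_add_sin_sq p.2]
    simp only [hB_def, neg_mul, LinearMap.det_toContinuousLinearMap, LinearMap.det_toLin,
      Matrix.det_fin_two_of, sub_neg_eq_add]
    ring
  have hcov : ∫⁻ x in polarCoord.symm '' s, GE (Phi a x)
      = ∫⁻ p in s, ENNReal.ofReal |(B p).det| * GE (Phi a (polarCoord.symm p)) :=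
    lintegral_image_eq_lintegral_abs_det_fderiv_mul volume hs_meas
      (fun p _ => (hasFDerivAt_polarCoord_symm p).hasFDerivWithinAt)
      (polarCoord.symm.injOn.mono hs_target) (fun x => GE (Phi a x))
  have himg_sub : Phi a '' (polarCoord.symm '' s) ⊆ AE := by
    rintro _ ⟨_, ⟨p, hp, rfl⟩, rfl⟩
    have hp1 : p.1 ∈ Set.Ioo r R := hp.1
    have heq : Phi a (polarCoord.symm p) = curve a p.1 p.2 := Phi_polar a p.1 p.2
    rw [heq]
    constructor
    · rw [mem_ball, curve_dist a p.1 p.2 (hr0.trans hp1.1).le]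
      exact hp1.2
    · intro hmem'
      rw [mem_ball, curve_dist a p.1 p.2 (hr0.trans hp1.1).le] at hmem'
      exact absurd hmem' (not_lt.2 hp1.1.le)
  have hstep2 : ∫⁻ x in polarCoord.symm '' s, GE (Phi a x)
      = ∫⁻ y in Phi a '' (polarCoord.symm '' s), GE y :=
    (Phi_mp a).setLIntegral_comp_emb (Phi_emb a) GE _
  have hlow1 : ∫⁻ p in s, ENNReal.ofReal |(B p).det| * GE (Phi a (polarCoord.symm p))
      ≤ ∫⁻ x in AE, GE x := by
    rw [← hcov, hstep2]
    exact lintegral_mono_set himg_sub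
  have hinteq : ∫⁻ p in s, ENNReal.ofReal |(B p).det| * GE (Phi a (polarCoord.symm p))
      = ∫⁻ p in s, ENNReal.ofReal p.1 * GE (curve a p.1 p.2) := by
    apply setLIntegral_congr_fun hs_meas
    intro p hp
    dsimp only
    rw [hB_det, abs_of_pos (hr0.trans hp.1.1), Phi_polar a p.1 p.2]
  have hcont_curve2 : Continuous fun p : ℝ × ℝ => curve a p.1 p.2 := by
    unfold curve
    exact continuous_const.add (continuous_fst.smul (pvec_contDiff.continuous.comp continuous_snd))
  have hmeas_f : Measurable fun p : ℝ × ℝ => ENNReal.ofReal p.1 * GE (curve a p.1 p.2) := by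
    apply Measurable.mul (f := fun p : ℝ × ℝ => ENNReal.ofReal p.1) (g := fun p => GE (curve a p.1 p.2))
    · exact ENNReal.measurable_ofReal.comp measurable_fst
    · have h1 : Measurable fun p : ℝ × ℝ => fderiv ℝ v (curve a p.1 p.2) :=
        (measurable_fderiv ℝ v).comp hcont_curve2.measurable
      exact ENNReal.measurable_ofReal.comp (h1.norm.pow_const 2)
  have hfub : ∫⁻ p in s, ENNReal.ofReal p.1 * GE (curve a p.1 p.2)
      = ∫⁻ t in Set.Ioo r R, ∫⁻ θ in Set.Ioo (-π) π, ENNReal.ofReal t * GE (curve a t θ) := by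
    rw [hs_def, Measure.volume_eq_prod, ← Measure.prod_restrict,
      lintegral_prod _ hmeas_f.aemeasurable]
  -- inner circle estimate
  have hinner : ∀ t, t ∈ Set.Ioo r R →
      ENNReal.ofReal (2*osc^2/π * t⁻¹)
        ≤ ∫⁻ θ in Set.Ioo (-π) π, ENNReal.ofReal t * GE (curve a t θ) := by
    intro t ht
    have ht0 : 0 < t := hr0.trans ht.1
    have hmem : ∀ θ, curve a t θ ∈ ball a R := fun θ => by
      rw [mem_ball, curve_dist a t θ ht0.le]; exact ht.2
    have hfc : ContinuousOn (fderiv ℝ v) (ball a R) :=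
      (hv.mono ball_subset_closedBall).continuousOn_fderiv_of_isOpen isOpen_ball le_rfl
    have hccurve : Continuous fun θ => curve a t θ :=
      continuous_const.add (pvec_contDiff.continuous.const_smul t)
    have hcont_f : Continuous fun θ => ‖fderiv ℝ v (curve a t θ)‖^2 :=
      ((hfc.comp_continuous hccurve hmem).norm).pow 2
    have hint_f : IntegrableOn (fun θ => ‖fderiv ℝ v (curve a t θ)‖^2) (Set.Ioo (-π) π) :=
      (hcont_f.integrableOn_Icc).mono_set Set.Ioo_subset_Icc_self
    have heq1 : ∫⁻ θ in Set.Ioo (-π) π, ENNReal.ofReal t * GE (curve a t θ)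
        = ENNReal.ofReal t * ∫⁻ θ in Set.Ioo (-π) π, GE (curve a t θ) :=
      lintegral_const_mul _ (ENNReal.measurable_ofReal.comp (hcont_f.measurable))
    have heq2 : ∫⁻ θ in Set.Ioo (-π) π, GE (curve a t θ)
        = ENNReal.ofReal (∫ θ in Set.Ioo (-π) π, ‖fderiv ℝ v (curve a t θ)‖^2) :=
      (ofReal_integral_eq_lintegral_ofReal hint_f
        (Filter.Eventually.of_forall fun θ => by positivity)).symm
    have heq3 : (∫ θ in Set.Ioo (-π) π, ‖fderiv ℝ v (curve a t θ)‖^2)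
        = ∫ θ in (-π)..π, ‖fderiv ℝ v (curve a t θ)‖^2 := by
      rw [intervalIntegral.integral_of_le (by linarith : (-π:ℝ) ≤ π),
        integral_Ioc_eq_integral_Ioo]
    calc ENNReal.ofReal (2*osc^2/π * t⁻¹)
        ≤ ENNReal.ofReal (t * ∫ θ in (-π)..π, ‖fderiv ℝ v (curve a t θ)‖^2) :=
          ENNReal.ofReal_le_ofReal (hkey t ht)
      _ = ENNReal.ofReal t
          * ENNReal.ofReal (∫ θ in (-π)..π, ‖fderiv ℝ v (curve a t θ)‖^2) :=
          ENNReal.ofReal_mul ht0.le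
      _ = ∫⁻ θ in Set.Ioo (-π) π, ENNReal.ofReal t * GE (curve a t θ) := by
          rw [← heq3, ← heq2, ← heq1]
  -- integrate the lower bound in t
  have hc_int : IntegrableOn (fun t : ℝ => 2*osc^2/π * t⁻¹) (Set.Ioo r R) := by
    have hco : ContinuousOn (fun t : ℝ => 2*osc^2/π * t⁻¹) (Set.Icc r R) := by
      apply continuousOn_const.mul
      apply ContinuousOn.inv₀ continuousOn_id
      intro x hx
      exact (hr0.trans_le hx.1).ne'
    exact (hco.integrableOn_compact isCompact_Icc).mono_set Set.Ioo_subset_Icc_self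
  have hlogeq : (∫ t in Set.Ioo r R, 2*osc^2/π * t⁻¹) = 2*osc^2/π * Real.log (R/r) := by
    rw [← integral_Ioc_eq_integral_Ioo,
      ← intervalIntegral.integral_of_le hrR.le, intervalIntegral.integral_const_mul,
      integral_inv_of_pos hr0 (hr0.trans hrR)]
  have hlow2 : ENNReal.ofReal (2*osc^2/π * Real.log (R/r))
      ≤ ∫⁻ t in Set.Ioo r R, ∫⁻ θ in Set.Ioo (-π) π, ENNReal.ofReal t * GE (curve a t θ) := by
    have h1 : ∫⁻ t in Set.Ioo r R, ENNReal.ofReal (2*osc^2/π * t⁻¹)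
        ≤ ∫⁻ t in Set.Ioo r R, ∫⁻ θ in Set.Ioo (-π) π, ENNReal.ofReal t * GE (curve a t θ) :=
      setLIntegral_mono' measurableSet_Ioo (fun t ht => hinner t ht)
    have h2 : ENNReal.ofReal (2*osc^2/π * Real.log (R/r))
        = ∫⁻ t in Set.Ioo r R, ENNReal.ofReal (2*osc^2/π * t⁻¹) := by
      rw [← hlogeq]
      refine ofReal_integral_eq_lintegral_ofReal hc_int ?_
      refine (ae_restrict_iff' measurableSet_Ioo).2 (Filter.Eventually.of_forall fun t ht => ?_)
      have ht0 : 0 < t := hr0.trans ht.1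
      positivity
    rw [h2]
    exact h1
  have final : ENNReal.ofReal (2*osc^2/π * Real.log (R/r))
      ≤ ENNReal.ofReal (∫ x in AE, ‖fderiv ℝ v x‖^2) := by
    rw [hofReal]
    calc ENNReal.ofReal (2*osc^2/π * Real.log (R/r))
        ≤ ∫⁻ t in Set.Ioo r R, ∫⁻ θ in Set.Ioo (-π) π, ENNReal.ofReal t * GE (curve a t θ) :=
          hlow2
      _ = ∫⁻ p in s, ENNReal.ofReal p.1 * GE (curve a p.1 p.2) := hfub.symm
      _ = ∫⁻ p in s, ENNReal.ofReal |(B p).det| * GE (Phi a (polarCoord.symm p)) := hinteq.symm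
      _ ≤ ∫⁻ x in AE, GE x := hlow1
  have hnn : 0 ≤ ∫ x in AE, ‖fderiv ℝ v x‖^2 :=
    integral_nonneg fun x => by positivity
  have hreal : 2*osc^2/π * Real.log (R/r) ≤ ∫ x in AE, ‖fderiv ℝ v x‖^2 :=
    (ENNReal.ofReal_le_ofReal_iff hnn).1 final
  have hmul := mul_le_mul_of_nonneg_left hreal hpi.le
  have hfe : π * (2*osc^2/π * Real.log (R/r)) = 2*(osc^2 * Real.log (R/r)) := by
    field_simp
  rw [hfe] at hmul
  nlinarith [mul_nonneg (sq_nonneg osc) hlog, hmul]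
end

section
/- Let $1 < p < 2$, let $\mu$ be a finite measure on a set $\Omega$, and suppose $(f_\epsilon)_{\epsilon > 0}$, $f$ are measurable real-valued functions with $\sup_\epsilon \int_\Omega (\epsilon + f_\epsilon^2 + f^2)^{p/2} d\mu < \infty$ and $\int_\Omega (\epsilon + f_\epsilon^2 + f^2)^{(p-2)/2} |f_\epsilon - f|^2 \, d\mu \to 0$ as $\epsilon \to 0$. Then $\int_\Omega |f_\epsilon - f|^p d\mu \to 0$. -/
open MeasureTheory Real Filter

lemma memLp_of_integrable_rpow' {Ω : Type*} [MeasurableSpace Ω] {μ : Measure Ω}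
    {g : Ω → ℝ} (hg : Measurable g) (hg0 : ∀ x, 0 ≤ g x) {r : ℝ} (hr : 0 < r)
    (hint : Integrable g μ) :
    MemLp (fun x => g x ^ (1 / r)) (ENNReal.ofReal r) μ := by
  have q0 : ENNReal.ofReal r ≠ 0 := by simp [ENNReal.ofReal_eq_zero, not_le, hr]
  have qtop : ENNReal.ofReal r ≠ ⊤ := ENNReal.ofReal_ne_top
  have hmeas : AEStronglyMeasurable (fun x => g x ^ (1 / r)) μ :=
    (hg.pow measurable_const).aestronglyMeasurable
  have h := memLp_norm_rpow_iff (q := ENNReal.ofReal r) (p := ENNReal.ofReal r)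
    (f := fun x => g x ^ (1 / r)) hmeas q0 qtop
  rw [ENNReal.div_self q0 qtop, ENNReal.toReal_ofReal hr.le] at h
  apply h.mp
  rw [memLp_one_iff_integrable]
  apply hint.congr
  filter_upwards with x
  rw [Real.norm_of_nonneg (Real.rpow_nonneg (hg0 x) _), ← Real.rpow_mul (hg0 x),
    one_div_mul_cancel hr.ne', Real.rpow_one]

/-- From weighted L² convergence with degenerate weight to Lᵖ convergence, 1 < p < 2. -/
theorem stmt_15 {Ω : Type*} [MeasurableSpace Ω] (μ : Measure Ω) [IsFiniteMeasure μ]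
    (p : ℝ) (hp1 : 1 < p) (hp2 : p < 2)
    (F : ℝ → Ω → ℝ) (f : Ω → ℝ) (hF : ∀ ε, 0 < ε → Measurable (F ε)) (hf : Measurable f)
    (hbdd : ∃ B : ℝ, ∀ ε, 0 < ε →
      Integrable (fun x => (ε + F ε x ^ 2 + f x ^ 2) ^ (p / 2)) μ ∧
      ∫ x, (ε + F ε x ^ 2 + f x ^ 2) ^ (p / 2) ∂μ ≤ B)
    (hint : ∀ ε, 0 < ε →
      Integrable (fun x => (ε + F ε x ^ 2 + f x ^ 2) ^ ((p - 2) / 2) * |F ε x - f x| ^ 2) μ)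
    (hconv : Tendsto (fun ε => ∫ x, (ε + F ε x ^ 2 + f x ^ 2) ^ ((p - 2) / 2) * |F ε x - f x| ^ 2 ∂μ)
      (nhdsWithin 0 (Set.Ioi 0)) (nhds 0)) :
    Tendsto (fun ε => ∫ x, |F ε x - f x| ^ p ∂μ) (nhdsWithin 0 (Set.Ioi 0)) (nhds 0) := by
  obtain ⟨B, hB⟩ := hbdd
  set B' : ℝ := max B 0 with hB'def
  have hp0 : 0 < p := lt_trans one_pos hp1
  -- conjugate exponents
  have hr : (1 : ℝ) < 2 / p := by
    rw [lt_div_iff₀ hp0]; linarith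
  have h2p : (0 : ℝ) < 2 - p := by linarith
  have hs : (0 : ℝ) < 2 / (2 - p) := div_pos two_pos h2p
  have hpq : Real.HolderConjugate (2 / p) (2 / (2 - p)) := by
    rw [Real.holderConjugate_iff]; constructor
    · exact hr
    · rw [inv_div, inv_div]; ring
  -- the key bound for each ε > 0
  have key : ∀ ε : ℝ, 0 < ε →
      ∫ x, |F ε x - f x| ^ p ∂μ ≤
        (∫ x, (ε + F ε x ^ 2 + f x ^ 2) ^ ((p - 2) / 2) * |F ε x - f x| ^ 2 ∂μ) ^ (p / 2) *
          B' ^ ((2 - p) / 2) := by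
    intro ε hε
    set w : Ω → ℝ := fun x => ε + F ε x ^ 2 + f x ^ 2 with hw
    have hwpos : ∀ x, 0 < w x := fun x => by positivity
    have hwmeas : Measurable w :=
      (measurable_const.add ((hF ε hε).pow measurable_const)).add (hf.pow measurable_const)
    set g : Ω → ℝ := fun x => w x ^ ((p - 2) / 2) * |F ε x - f x| ^ 2 with hg
    have hg0 : ∀ x, 0 ≤ g x := fun x =>
      mul_nonneg (Real.rpow_nonneg (hwpos x).le _) (by positivity)
    have hgmeas : Measurable g :=
      (hwmeas.pow measurable_const).mul
        (((hF ε hε).sub hf).abs.pow measurable_const)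
    set h : Ω → ℝ := fun x => w x ^ (p / 2) with hh
    have hh0 : ∀ x, 0 ≤ h x := fun x => Real.rpow_nonneg (hwpos x).le _
    have hhmeas : Measurable h := hwmeas.pow measurable_const
    -- Memℒp facts
    have ha : MemLp (fun x => g x ^ (1 / (2 / p))) (ENNReal.ofReal (2 / p)) μ :=
      memLp_of_integrable_rpow' hgmeas hg0 (lt_trans one_pos hr) (hint ε hε)
    have hb : MemLp (fun x => h x ^ (1 / (2 / (2 - p)))) (ENNReal.ofReal (2 / (2 - p))) μ :=
      memLp_of_integrable_rpow' hhmeas hh0 hs (hB ε hε).1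
    have holder := integral_mul_le_Lp_mul_Lq_of_nonneg hpq
      (Eventually.of_forall fun x => Real.rpow_nonneg (hg0 x) _)
      (Eventually.of_forall fun x => Real.rpow_nonneg (hh0 x) _) ha hb
    have hinv1 : 1 / (2 / p) = p / 2 := by rw [one_div_div]
    have hinv2 : 1 / (2 / (2 - p)) = (2 - p) / 2 := by rw [one_div_div]
    rw [hinv1, hinv2] at holder
    -- identify the left side with ∫ |F ε - f|^p
    have hleft : ∀ x, g x ^ (p / 2) * h x ^ ((2 - p) / 2) = |F ε x - f x| ^ p := by
      intro x
      have habs : (0 : ℝ) ≤ |F ε x - f x| := abs_nonneg _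
      rw [hg, hh]
      rw [Real.mul_rpow (Real.rpow_nonneg (hwpos x).le _) (by positivity),
        ← Real.rpow_natCast |F ε x - f x| 2,
        ← Real.rpow_mul (hwpos x).le, ← Real.rpow_mul habs,
        ← Real.rpow_mul (hwpos x).le]
      rw [mul_assoc, mul_comm ((|F ε x - f x|) ^ ((2 : ℕ) * (p / 2) : ℝ)), ← mul_assoc,
        ← Real.rpow_add (hwpos x)]
      have e1 : (p - 2) / 2 * (p / 2) + p / 2 * ((2 - p) / 2) = 0 := by ring
      have e2 : ((2 : ℕ) : ℝ) * (p / 2) = p := by push_cast; ring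
      rw [e1, e2, Real.rpow_zero, one_mul]
    -- identify the two integrals on the right
    have hA : ∀ x, (g x ^ (p / 2)) ^ (2 / p) = g x := by
      intro x
      rw [← Real.rpow_mul (hg0 x)]
      rw [show p / 2 * (2 / p) = 1 by field_simp, Real.rpow_one]
    have hC : ∀ x, (h x ^ ((2 - p) / 2)) ^ (2 / (2 - p)) = h x := by
      intro x
      rw [← Real.rpow_mul (hh0 x)]
      rw [show (2 - p) / 2 * (2 / (2 - p)) = 1 by
        field_simp, Real.rpow_one]
    calc ∫ x, |F ε x - f x| ^ p ∂μ
        = ∫ x, g x ^ (p / 2) * h x ^ ((2 - p) / 2) ∂μ := by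
          refine integral_congr_ae (Eventually.of_forall fun x => ?_)
          exact (hleft x).symm
      _ ≤ (∫ x, (g x ^ (p / 2)) ^ (2 / p) ∂μ) ^ (p / 2) *
            (∫ x, (h x ^ ((2 - p) / 2)) ^ (2 / (2 - p)) ∂μ) ^ ((2 - p) / 2) := holder
      _ = (∫ x, g x ∂μ) ^ (p / 2) * (∫ x, h x ∂μ) ^ ((2 - p) / 2) := by
          congr 1
          · congr 1; exact integral_congr_ae (Eventually.of_forall hA)
          · congr 1; exact integral_congr_ae (Eventually.of_forall hC)
      _ ≤ (∫ x, g x ∂μ) ^ (p / 2) * B' ^ ((2 - p) / 2) := by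
          refine mul_le_mul_of_nonneg_left ?_
            (Real.rpow_nonneg (integral_nonneg hg0) _)
          refine Real.rpow_le_rpow (integral_nonneg hh0) ?_ (by linarith)
          exact le_trans (hB ε hε).2 (le_max_left _ _)
  -- conclude by squeezing
  have hupper : Tendsto (fun ε =>
      (∫ x, (ε + F ε x ^ 2 + f x ^ 2) ^ ((p - 2) / 2) * |F ε x - f x| ^ 2 ∂μ) ^ (p / 2) *
        B' ^ ((2 - p) / 2)) (nhdsWithin 0 (Set.Ioi 0)) (nhds 0) := by
    have h1 : Tendsto (fun ε =>
        (∫ x, (ε + F ε x ^ 2 + f x ^ 2) ^ ((p - 2) / 2) * |F ε x - f x| ^ 2 ∂μ) ^ (p / 2))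
        (nhdsWithin 0 (Set.Ioi 0)) (nhds ((0 : ℝ) ^ (p / 2))) :=
      hconv.rpow_const (Or.inr (by positivity))
    rw [Real.zero_rpow (by positivity)] at h1
    simpa using h1.mul_const (B' ^ ((2 - p) / 2))
  refine squeeze_zero' ?_ ?_ hupper
  · filter_upwards [self_mem_nhdsWithin] with ε hε
    exact integral_nonneg fun x => Real.rpow_nonneg (abs_nonneg _) _
  · filter_upwards [self_mem_nhdsWithin] with ε hε
    exact key ε hε
end
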